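/- For every integer v ≥ 1 and every real x > 0, the matrix J(x) is invertible (equivalently, det J(x) ≠ 0). -/

import Mathlib

open Real MeasureTheory

/-- Chi-squared cumulative distribution function with `ν` degrees of freedom. -/
noncomputable def chiCDF (ν x : ℝ) : ℝ :=
  ((2 : ℝ) ^ (ν / 2) * Real.Gamma (ν / 2))⁻¹ *
    ∫ t in (0 : ℝ)..x, t ^ (ν / 2 - 1) * Real.exp (-t / 2)

/-- The `v×v` matrix `J(x)` with entries
`J_{kj}(x) = (1/2)·[(1 + 2δ_{kj})·F_{v+4}(x)/F_v(x) − F_{v+2}(x)²/F_v(x)²]`. -/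
noncomputable def Jmat (v : ℕ) (x : ℝ) : Matrix (Fin v) (Fin v) ℝ :=
  Matrix.of fun k j =>
    (1 / 2) * ((1 + 2 * (if k = j then (1 : ℝ) else 0)) * chiCDF (v + 4) x / chiCDF v x
      - (chiCDF (v + 2) x) ^ 2 / (chiCDF v x) ^ 2)


lemma diag_null (μ : Measure ℝ) [SFinite μ] (hμ : μ ≤ volume) :
    (μ.prod μ) {p : ℝ × ℝ | p.1 = p.2} = 0 := by
  have hms : MeasurableSet {p : ℝ × ℝ | p.1 = p.2} :=
    measurableSet_eq_fun measurable_fst measurable_snd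
  rw [Measure.prod_apply hms]
  have h0 : ∀ s : ℝ, μ (Prod.mk s ⁻¹' {p : ℝ × ℝ | p.1 = p.2}) = 0 := by
    intro s
    have h1 : (Prod.mk s ⁻¹' {p : ℝ × ℝ | p.1 = p.2}) = {s} := by
      ext t; simp [eq_comm]
    rw [h1]
    exact le_antisymm (le_trans (hμ _) (by simp)) zero_le
  calc ∫⁻ s, μ (Prod.mk s ⁻¹' {p : ℝ × ℝ | p.1 = p.2}) ∂μ = ∫⁻ _, 0 ∂μ := by
        exact lintegral_congr h0
    _ = 0 := lintegral_zero

noncomputable def g (a t : ℝ) : ℝ := t ^ a * Real.exp (-t / 2)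

lemma g_pos {a t : ℝ} (ht : 0 < t) : 0 < g a t :=
  mul_pos (Real.rpow_pos_of_pos ht a) (Real.exp_pos _)

lemma g_ii {a : ℝ} (ha : -1 < a) (x : ℝ) : IntervalIntegrable (g a) volume 0 x := by
  apply (intervalIntegral.intervalIntegrable_rpow' ha).mul_continuousOn
  exact (Real.continuous_exp.comp (by continuity)).continuousOn

lemma g_intOn {a : ℝ} (ha : -1 < a) {x : ℝ} (hx : 0 ≤ x) :
    IntegrableOn (g a) (Set.Ioc 0 x) := by
  have := g_ii ha x
  rwa [intervalIntegrable_iff_integrableOn_Ioc_of_le hx] at this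

lemma g_shift {a t : ℝ} (ht : 0 < t) : g (a + 1) t = t * g a t := by
  unfold g
  rw [Real.rpow_add_one ht.ne' a]; ring

lemma g_shift2 {a t : ℝ} (ht : 0 < t) : g (a + 2) t = t ^ 2 * g a t := by
  have : a + 2 = a + 1 + 1 := by ring
  rw [this, g_shift ht, g_shift ht]; ring

lemma key_sq_lt {a : ℝ} (ha : -1 < a) {x : ℝ} (hx : 0 < x) :
    (∫ t in Set.Ioc (0:ℝ) x, g (a + 1) t) ^ 2
      < (∫ t in Set.Ioc (0:ℝ) x, g a t) * (∫ t in Set.Ioc (0:ℝ) x, g (a + 2) t) := by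
  set μ : Measure ℝ := volume.restrict (Set.Ioc (0:ℝ) x) with hμdef
  set I0 := ∫ t in Set.Ioc (0:ℝ) x, g a t
  set I1 := ∫ t in Set.Ioc (0:ℝ) x, g (a + 1) t
  set I2 := ∫ t in Set.Ioc (0:ℝ) x, g (a + 2) t
  set P : ℝ × ℝ → ℝ := fun p => g a p.1 * g a p.2 * (p.1 - p.2) ^ 2 with hP
  set Q : ℝ × ℝ → ℝ := fun p =>
    g (a + 2) p.1 * g a p.2 - 2 * (g (a + 1) p.1 * g (a + 1) p.2)
      + g a p.1 * g (a + 2) p.2 with hQ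
  have hmem : ∀ᵐ p ∂(μ.prod μ), p ∈ Set.Ioc (0:ℝ) x ×ˢ Set.Ioc (0:ℝ) x := by
    rw [hμdef, Measure.prod_restrict]
    exact ae_restrict_mem (measurableSet_Ioc.prod measurableSet_Ioc)
  have hPQ : P =ᵐ[μ.prod μ] Q := by
    filter_upwards [hmem] with p hp
    obtain ⟨⟨h1, _⟩, ⟨h2, _⟩⟩ := hp
    simp only [hP, hQ, g_shift h1, g_shift h2, g_shift2 h1, g_shift2 h2]
    ring
  have hi0 : Integrable (g a) μ := g_intOn ha hx.le
  have hi1 : Integrable (g (a + 1)) μ := g_intOn (by linarith) hx.le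
  have hi2 : Integrable (g (a + 2)) μ := g_intOn (by linarith) hx.le
  have hQint : Integrable Q (μ.prod μ) := by
    exact ((hi2.mul_prod hi0).sub (((hi1.mul_prod hi1)).const_mul 2)).add (hi0.mul_prod hi2)
  have hPint : Integrable P (μ.prod μ) := hQint.congr hPQ.symm
  have hQval : ∫ p, Q p ∂(μ.prod μ) = 2 * (I0 * I2) - 2 * I1 ^ 2 := by
    have e1 : ∫ p, Q p ∂(μ.prod μ)
        = (∫ p : ℝ × ℝ, (g (a + 2) p.1 * g a p.2 - 2 * (g (a + 1) p.1 * g (a + 1) p.2)) ∂(μ.prod μ))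
          + ∫ p : ℝ × ℝ, g a p.1 * g (a + 2) p.2 ∂(μ.prod μ) := by
      rw [hQ]
      exact integral_add
        ((hi2.mul_prod hi0).sub ((hi1.mul_prod hi1).const_mul 2)) (hi0.mul_prod hi2)
    have e2 : ∫ p : ℝ × ℝ, (g (a + 2) p.1 * g a p.2 - 2 * (g (a + 1) p.1 * g (a + 1) p.2)) ∂(μ.prod μ)
        = (∫ p : ℝ × ℝ, g (a + 2) p.1 * g a p.2 ∂(μ.prod μ))
          - ∫ p : ℝ × ℝ, 2 * (g (a + 1) p.1 * g (a + 1) p.2) ∂(μ.prod μ) :=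
      integral_sub (hi2.mul_prod hi0) ((hi1.mul_prod hi1).const_mul 2)
    rw [e1, e2, integral_const_mul, integral_prod_mul, integral_prod_mul, integral_prod_mul]
    ring
  have hPpos : 0 < ∫ p, P p ∂(μ.prod μ) := by
    rw [integral_pos_iff_support_of_nonneg_ae ?nn hPint]
    case nn =>
      filter_upwards [hmem] with p hp
      obtain ⟨⟨h1, _⟩, ⟨h2, _⟩⟩ := hp
      have := g_pos (a := a) h1
      have := g_pos (a := a) h2
      positivity
    · have hsub : (Set.Ioc (0:ℝ) x ×ˢ Set.Ioc (0:ℝ) x) \ {p : ℝ × ℝ | p.1 = p.2}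
          ⊆ Function.support P := by
        rintro ⟨s, t⟩ ⟨⟨hs, ht⟩, hne⟩
        have hst : s ≠ t := hne
        have hga := g_pos (a := a) hs.1
        have hgb := g_pos (a := a) ht.1
        have hsq : (0:ℝ) < (s - t) ^ 2 :=
          lt_of_le_of_ne (sq_nonneg _) (Ne.symm (pow_ne_zero 2 (sub_ne_zero_of_ne hst)))
        rw [Function.mem_support]
        exact (mul_pos (mul_pos hga hgb) hsq).ne'
      have hdiag : (μ.prod μ) {p : ℝ × ℝ | p.1 = p.2} = 0 :=
        diag_null _ Measure.restrict_le_self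
      have hrect : (μ.prod μ) (Set.Ioc (0:ℝ) x ×ˢ Set.Ioc (0:ℝ) x) = (ENNReal.ofReal x) * (ENNReal.ofReal x) := by
        rw [Measure.prod_prod]
        rw [hμdef, Measure.restrict_apply_self, Real.volume_Ioc]
        norm_num
      calc (0:ENNReal) < ENNReal.ofReal x * ENNReal.ofReal x := by
            have := ENNReal.ofReal_pos.mpr hx
            exact ENNReal.mul_pos this.ne' this.ne'
        _ = (μ.prod μ) ((Set.Ioc (0:ℝ) x ×ˢ Set.Ioc (0:ℝ) x) \ {p : ℝ × ℝ | p.1 = p.2}) := by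
            rw [measure_diff_null hdiag, hrect]
        _ ≤ (μ.prod μ) (Function.support P) := measure_mono hsub
  have hPQint : ∫ p, P p ∂(μ.prod μ) = ∫ p, Q p ∂(μ.prod μ) := integral_congr_ae hPQ
  nlinarith [hPpos, hPQint, hQval]

lemma g_int_pos {a : ℝ} (ha : -1 < a) {x : ℝ} (hx : 0 < x) :
    0 < ∫ t in (0:ℝ)..x, g a t :=
  intervalIntegral.intervalIntegral_pos_of_pos_on (g_ii ha x)
    (fun t ht => g_pos ht.1) hx

lemma chiCDF_eq (ν x : ℝ) :
    chiCDF ν x = ((2:ℝ) ^ (ν/2) * Real.Gamma (ν/2))⁻¹ * ∫ t in (0:ℝ)..x, g (ν/2 - 1) t := rfl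

lemma chiCDF_pos {ν x : ℝ} (hν : 0 < ν) (hx : 0 < x) : 0 < chiCDF ν x := by
  rw [chiCDF_eq]
  exact mul_pos (inv_pos.mpr (mul_pos (Real.rpow_pos_of_pos two_pos _)
    (Real.Gamma_pos_of_pos (by linarith)))) (g_int_pos (by linarith) hx)

lemma key_sq_lt' {a : ℝ} (ha : -1 < a) {x : ℝ} (hx : 0 < x) :
    (∫ t in (0:ℝ)..x, g (a + 1) t) ^ 2
      < (∫ t in (0:ℝ)..x, g a t) * (∫ t in (0:ℝ)..x, g (a + 2) t) := by
  rw [intervalIntegral.integral_of_le hx.le, intervalIntegral.integral_of_le hx.le,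
    intervalIntegral.integral_of_le hx.le]
  exact key_sq_lt ha hx

lemma chi_ineq (v : ℕ) (hv : 1 ≤ v) {x : ℝ} (hx : 0 < x) :
    (v : ℝ) * chiCDF ((v:ℝ) + 2) x ^ 2
      < ((v : ℝ) + 2) * chiCDF ((v:ℝ) + 4) x * chiCDF (v:ℝ) x := by
  have hV : (0:ℝ) < (v:ℝ) := by exact_mod_cast hv
  set V := (v:ℝ) with hVdef
  have hu : (0:ℝ) < V / 2 := by linarith
  set A := (2:ℝ) ^ (V / 2) with hAdef
  set G := Real.Gamma (V / 2) with hGdef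
  have hA : 0 < A := Real.rpow_pos_of_pos two_pos _
  have hG : 0 < G := Real.Gamma_pos_of_pos hu
  set I0 := ∫ t in (0:ℝ)..x, g (V/2 - 1) t with hI0def
  set I1 := ∫ t in (0:ℝ)..x, g ((V/2 - 1) + 1) t with hI1def
  set I2 := ∫ t in (0:ℝ)..x, g ((V/2 - 1) + 2) t with hI2def
  have hI : I1 ^ 2 < I0 * I2 := key_sq_lt' (by linarith) hx
  have hΓ2 : Real.Gamma ((V + 2)/2) = (V/2) * G := by
    rw [show (V + 2)/2 = V/2 + 1 by ring, Real.Gamma_add_one hu.ne', hGdef]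
  have hΓ4 : Real.Gamma ((V + 4)/2) = (V/2 + 1) * ((V/2) * G) := by
    rw [show (V + 4)/2 = (V/2 + 1) + 1 by ring, Real.Gamma_add_one (by linarith),
      show V/2 + 1 = V/2 + 1 from rfl]
    rw [show (V/2 + 1 : ℝ) = V/2 + 1 from rfl]
    congr 1
    rw [Real.Gamma_add_one hu.ne', hGdef]
  have hp2 : (2:ℝ) ^ ((V + 2)/2) = 2 * A := by
    rw [show (V + 2)/2 = V/2 + 1 by ring, Real.rpow_add_one two_ne_zero, hAdef]; ring
  have hp4 : (2:ℝ) ^ ((V + 4)/2) = 4 * A := by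
    rw [show (V + 4)/2 = V/2 + 1 + 1 by ring, Real.rpow_add_one two_ne_zero,
      Real.rpow_add_one two_ne_zero, hAdef]; ring
  have E0 : chiCDF V x = (A * G)⁻¹ * I0 := by rw [chiCDF_eq]
  have E2 : chiCDF (V + 2) x = (V * (A * G))⁻¹ * I1 := by
    rw [chiCDF_eq, hp2, hΓ2, show (V + 2)/2 - 1 = (V/2 - 1) + 1 by ring, ← hI1def]
    congr 1
    rw [show 2 * A * (V/2 * G) = V * (A * G) by ring]
  have E4 : chiCDF (V + 4) x = (V * (V + 2) * (A * G))⁻¹ * I2 := by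
    rw [chiCDF_eq, hp4, hΓ4, show (V + 4)/2 - 1 = (V/2 - 1) + 2 by ring, ← hI2def]
    congr 1
    rw [show 4 * A * ((V/2 + 1) * (V/2 * G)) = V * (V + 2) * (A * G) by ring]
  rw [E0, E2, E4]
  have hAG : (0:ℝ) < A * G := mul_pos hA hG
  have h1 : V * ((V * (A * G))⁻¹ * I1) ^ 2 = (A * G)⁻¹ ^ 2 * I1 ^ 2 / V := by
    field_simp
  have h2 : (V + 2) * ((V * (V + 2) * (A * G))⁻¹ * I2) * ((A * G)⁻¹ * I0)
      = (A * G)⁻¹ ^ 2 * (I0 * I2) / V := by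
    field_simp
  rw [h1, h2]
  gcongr

/-- `J(x)` is invertible; equivalently its determinant is nonzero. -/
theorem Jmat_invertible (v : ℕ) (hv : 1 ≤ v) (x : ℝ) (hx : 0 < x) :
    IsUnit (Jmat v x) ∧ (Jmat v x).det ≠ 0 := by
  have hV : (0:ℝ) < (v:ℝ) := by exact_mod_cast hv
  have hF0 : 0 < chiCDF (v:ℝ) x := chiCDF_pos hV hx
  have hF2 : 0 < chiCDF ((v:ℝ) + 2) x := chiCDF_pos (by linarith) hx
  have hF4 : 0 < chiCDF ((v:ℝ) + 4) x := chiCDF_pos (by linarith) hx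
  set F0 := chiCDF (v:ℝ) x with hF0def
  set F2 := chiCDF ((v:ℝ) + 2) x with hF2def
  set F4 := chiCDF ((v:ℝ) + 4) x with hF4def
  set A := F4 / F0 with hAdef
  set c := (A - F2 ^ 2 / F0 ^ 2) / 2 with hcdef
  have hApos : 0 < A := div_pos hF4 hF0
  have hkey : (v : ℝ) * F2 ^ 2 < ((v : ℝ) + 2) * F4 * F0 := chi_ineq v hv hx
  have hJ : Jmat v x = A • ((1 : Matrix (Fin v) (Fin v) ℝ)
      + Matrix.replicateCol Unit (fun _ : Fin v => c / A) * Matrix.replicateRow Unit (fun _ : Fin v => (1:ℝ))) := by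
    ext k j
    have hmulentry : (Matrix.replicateCol Unit (fun _ : Fin v => c / A)
        * Matrix.replicateRow Unit (fun _ : Fin v => (1:ℝ))) k j = c / A := by
      rw [Matrix.mul_apply]
      simp
    simp only [Jmat, Matrix.of_apply, Matrix.smul_apply, Matrix.add_apply, Matrix.one_apply,
      hmulentry, smul_eq_mul]
    rw [← hF0def, ← hF2def, ← hF4def]
    by_cases h : k = j
    · simp only [if_pos h]
      rw [hcdef, hAdef]
      field_simp
      ring
    · simp only [if_neg h]
      rw [hcdef, hAdef]
      field_simp
      ring
  have hdet : (Jmat v x).det = A ^ v * (1 + (v:ℝ) * (c / A)) := by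
    rw [hJ, Matrix.det_smul, Matrix.det_one_add_replicateCol_mul_replicateRow, Fintype.card_fin]
    congr 1
    simp [dotProduct, Finset.sum_const, Finset.card_univ, nsmul_eq_mul]
  have hAc : 0 < A + (v:ℝ) * c := by
    have e : A + (v:ℝ) * c = (((v:ℝ) + 2) * F4 * F0 - (v:ℝ) * F2 ^ 2) / (2 * F0 ^ 2) := by
      rw [hAdef, hcdef, hAdef]
      field_simp
      ring
    rw [e]
    apply div_pos (by linarith) (by positivity)
  have hfac : 1 + (v:ℝ) * (c / A) = (A + (v:ℝ) * c) / A := by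
    field_simp
  have hdetne : (Jmat v x).det ≠ 0 := by
    rw [hdet, hfac]
    exact mul_ne_zero (pow_ne_zero _ hApos.ne') (div_pos hAc hApos).ne'
  exact ⟨(Matrix.isUnit_iff_isUnit_det _).mpr (isUnit_iff_ne_zero.mpr hdetne), hdetne⟩
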